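/- Let (X,r) be a left nondegenerate idempotent quadratic set with X finite, and fix an element x₁ ∈ X. Then for all x, y ∈ X there exists a unique z ∈ X such that (x,y) and (x₁,z) lie in the same r-orbit (equivalently, such that [xy] = [x₁z] in the Yang–Baxter monoid S(X,r)); moreover z is the unique element of X satisfying x₁▷z = x▷y. -/

import Mathlib

/-- The `r`-orbit equivalence on `X × X`: the equivalence relation generated by
relating `p` to `r p`. -/
def rOrbitRel {X : Type*} (r : X × X → X × X) : X × X → X × X → Prop :=
  Relation.EqvGen (fun p q => r p = q)

/-- The defining relations of the Yang–Baxter monoid: `xy ~ x'y'` whenever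
`r (x, y) = (x', y')`. -/
def ybRel {X : Type*} (r : X × X → X × X) : FreeMonoid X → FreeMonoid X → Prop :=
  fun a b => ∃ x y : X,
    a = FreeMonoid.of x * FreeMonoid.of y ∧
    b = FreeMonoid.of (r (x, y)).1 * FreeMonoid.of (r (x, y)).2

/-- The congruence on the free monoid on `X` generated by the Yang–Baxter relations;
the Yang–Baxter monoid `S(X, r)` is its quotient. -/
def ybCon {X : Type*} (r : X × X → X × X) : Con (FreeMonoid X) := conGen (ybRel r)

/-- r-image of two-letter words. -/
def rho {X : Type*} (r : X × X → X × X) (w : FreeMonoid X) : Option (X × X) :=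
  match FreeMonoid.toList w with
  | [a, b] => some (r (a, b))
  | _ => none

lemma rho_of_of {X : Type*} (r : X × X → X × X) (x y : X) :
    rho r (FreeMonoid.of x * FreeMonoid.of y) = some (r (x, y)) := rfl

lemma rho_none {X : Type*} (r : X × X → X × X) (w : FreeMonoid X)
    (h : (FreeMonoid.toList w).length ≠ 2) : rho r w = none := by
  unfold rho
  match hw : FreeMonoid.toList w with
  | [a, b] => exact absurd (by rw [hw]; rfl) h
  | [] => rfl
  | [a] => rfl
  | a :: b :: c :: t => rfl

def QCon {X : Type*} (r : X × X → X × X) : Con (FreeMonoid X) where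
  r a b := (FreeMonoid.toList a).length = (FreeMonoid.toList b).length ∧
    ((FreeMonoid.toList a).length ≤ 1 → a = b) ∧ rho r a = rho r b
  iseqv := by
    constructor
    · exact fun a => ⟨rfl, fun _ => rfl, rfl⟩
    · rintro a b ⟨h1, h2, h3⟩
      exact ⟨h1.symm, fun h => (h2 (h1 ▸ h)).symm, h3.symm⟩
    · rintro a b c ⟨h1, h2, h3⟩ ⟨h1', h2', h3'⟩
      exact ⟨h1.trans h1', fun h => (h2 h).trans (h2' (h1 ▸ h)), h3.trans h3'⟩
  mul' := by
    rintro a b c d ⟨h1, h2, h3⟩ ⟨h1', h2', h3'⟩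
    have hl : ∀ u v : FreeMonoid X, (FreeMonoid.toList (u * v)).length
        = (FreeMonoid.toList u).length + (FreeMonoid.toList v).length := by
      intro u v; simp [FreeMonoid.toList_mul]
    refine ⟨by rw [hl, hl, h1, h1'], ?_, ?_⟩
    · intro h
      rw [hl] at h
      have ha : (FreeMonoid.toList a).length ≤ 1 := by omega
      have hc : (FreeMonoid.toList c).length ≤ 1 := by omega
      rw [h2 ha, h2' hc]
    · by_cases htot : (FreeMonoid.toList a).length + (FreeMonoid.toList c).length = 2
      · -- cases on the split
        rcases Nat.lt_or_ge (FreeMonoid.toList a).length 2 with hlt | hge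
        · rcases Nat.lt_or_ge (FreeMonoid.toList a).length 1 with hlt0 | hge1
          · -- length a = 0
            have ha0 : (FreeMonoid.toList a).length = 0 := by omega
            have : FreeMonoid.toList a = [] := List.length_eq_zero_iff.mp ha0
            have ha1 : a = 1 := FreeMonoid.toList.injective (by simpa using this)
            have hb1 : b = 1 := by rw [← h2 (by omega)]; exact ha1
            rw [ha1, hb1, one_mul, one_mul]; exact h3'
          · -- length a = 1 : a = b, c = d
            have hac : a = b := h2 (by omega)
            have hcd : c = d := h2' (by omega)
            rw [hac, hcd]
        · -- length a = 2, length c = 0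
          have hc0 : (FreeMonoid.toList c).length = 0 := by omega
          have hc1 : c = 1 := FreeMonoid.toList.injective (by
            simpa using List.length_eq_zero_iff.mp hc0)
          have hd1 : d = 1 := by
            have := h2' (by omega)
            rw [← this, hc1]
          rw [hc1, hd1, mul_one, mul_one]
          exact h3
      · rw [rho_none r (a * c) (by rw [hl]; omega),
          rho_none r (b * d) (by rw [hl, ← h1, ← h1']; omega)]

lemma orbit_iff {X : Type*} (r : X × X → X × X) (hidem : r ∘ r = r) (p q : X × X) :
    rOrbitRel r p q ↔ r p = r q := by
  constructor
  · intro h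
    induction h with
    | rel a b hab => rw [← hab]; exact (congrFun hidem a).symm
    | refl => rfl
    | symm _ _ _ ih => exact ih.symm
    | trans _ _ _ _ _ ih1 ih2 => exact ih1.trans ih2
  · intro h
    have h1 : rOrbitRel r p (r p) := Relation.EqvGen.rel _ _ rfl
    have h2 : rOrbitRel r q (r q) := Relation.EqvGen.rel _ _ rfl
    exact Relation.EqvGen.trans _ _ _ h1
      (h ▸ Relation.EqvGen.symm _ _ h2)

lemma conGen_le_QCon {X : Type*} (r : X × X → X × X) (hidem : r ∘ r = r) :
    ybCon r ≤ QCon r := by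
  refine Con.conGen_le.mpr ?_
  rintro a b ⟨u, v, rfl, rfl⟩
  refine ⟨rfl, fun h => by simp [FreeMonoid.toList_mul, FreeMonoid.toList_of] at h, ?_⟩
  rw [rho_of_of, rho_of_of]
  exact congrArg some (congrFun hidem (u, v)).symm

lemma yb_of_orbit {X : Type*} (r : X × X → X × X) (p q : X × X)
    (h : r p = r q) :
    ybCon r (FreeMonoid.of p.1 * FreeMonoid.of p.2) (FreeMonoid.of q.1 * FreeMonoid.of q.2) := by
  have s1 : ybCon r (FreeMonoid.of p.1 * FreeMonoid.of p.2)
      (FreeMonoid.of (r p).1 * FreeMonoid.of (r p).2) :=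
    ConGen.Rel.of _ _ ⟨p.1, p.2, rfl, rfl⟩
  have s2 : ybCon r (FreeMonoid.of q.1 * FreeMonoid.of q.2)
      (FreeMonoid.of (r q).1 * FreeMonoid.of (r q).2) :=
    ConGen.Rel.of _ _ ⟨q.1, q.2, rfl, rfl⟩
  rw [h] at s1
  exact (ybCon r).trans s1 ((ybCon r).symm s2)


/-- Let `(X, r)` be a finite left nondegenerate idempotent quadratic set and `x₁ ∈ X`.
Then for all `x, y ∈ X` there is a unique `z ∈ X` with `(x, y)` and `(x₁, z)` in the same
`r`-orbit; lying in the same `r`-orbit is equivalent to the equality `[xy] = [x₁z]` in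
the Yang–Baxter monoid `S(X, r)`, and also equivalent to `x₁ ▷ z = x ▷ y`. -/
theorem stmt5 {X : Type*} [Finite X] (r : X × X → X × X)
    (hlnd : ∀ x : X, Function.Bijective fun y => (r (x, y)).1)
    (hidem : r ∘ r = r) (x₁ : X) :
    ∀ x y : X,
      (∃! z : X, rOrbitRel r (x, y) (x₁, z)) ∧
      (∀ z : X, rOrbitRel r (x, y) (x₁, z) ↔
        ybCon r (FreeMonoid.of x * FreeMonoid.of y) (FreeMonoid.of x₁ * FreeMonoid.of z)) ∧
      (∀ z : X, rOrbitRel r (x, y) (x₁, z) ↔ (r (x₁, z)).1 = (r (x, y)).1) := by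
  intro x y
  -- key: equality of first components forces equality of r-images
  have key : ∀ z : X, (r (x₁, z)).1 = (r (x, y)).1 → r (x₁, z) = r (x, y) := by
    intro z hz
    set a := (r (x, y)).1 with ha
    have e1 : r (x₁, z) = (a, (r (x₁, z)).2) := Prod.ext hz rfl
    have e2 : r (x, y) = (a, (r (x, y)).2) := Prod.ext rfl rfl
    have i1 : r (a, (r (x₁, z)).2) = (a, (r (x₁, z)).2) := by
      rw [← e1]; exact congrFun hidem (x₁, z)
    have i2 : r (a, (r (x, y)).2) = (a, (r (x, y)).2) := by
      rw [← e2]; exact congrFun hidem (x, y)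
    have : (r (x₁, z)).2 = (r (x, y)).2 := (hlnd a).injective (by
      show (r (a, _)).1 = (r (a, _)).1
      rw [i1, i2])
    exact Prod.ext hz this
  have keyiff : ∀ z : X, rOrbitRel r (x, y) (x₁, z) ↔ (r (x₁, z)).1 = (r (x, y)).1 := by
    intro z
    rw [orbit_iff r hidem]
    constructor
    · intro h; rw [h]
    · intro h; exact (key z h).symm
  refine ⟨?_, ?_, keyiff⟩
  · obtain ⟨z, hz, huniq⟩ := (hlnd x₁).existsUnique (r (x, y)).1
    exact ⟨z, (keyiff z).mpr hz, fun z' hz' => huniq z' ((keyiff z').mp hz')⟩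
  · intro z
    constructor
    · intro h
      exact yb_of_orbit r (x, y) (x₁, z) ((orbit_iff r hidem _ _).mp h)
    · intro h
      have hq := conGen_le_QCon r hidem h
      have := hq.2.2
      rw [rho_of_of, rho_of_of] at this
      rw [orbit_iff r hidem]
      exact Option.some_injective _ this
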